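/- Let C be an abelian category, X an object, and A a full subcategory closed under extensions and under kernels of epimorphisms between its objects. Let E be the full subcategory of the over-category C/X spanned by epimorphisms p : A ⟶ X with A ∈ A. If E is nonempty, then E is a connected category. -/

import Mathlib

open CategoryTheory CategoryTheory.Limits

/-- Let `C` be an abelian category, `X` an object, and `A` a class of objects closed under
extensions and under kernels of epimorphisms between its objects.  Let `E` be the full
subcategory of the over-category `C/X` spanned by epimorphisms `p : A ⟶ X` with `A ∈ A`.
If `E` is nonempty, then `E` is connected. -/
theorem isConnected_epis_from_resolving {C : Type*} [Category C] [Abelian C] (A : Set C)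
    (hext : ∀ S : ShortComplex C, S.ShortExact → S.X₁ ∈ A → S.X₃ ∈ A → S.X₂ ∈ A)
    (hker : ∀ S : ShortComplex C, S.ShortExact → S.X₂ ∈ A → S.X₃ ∈ A → S.X₁ ∈ A)
    (X : C)
    [Nonempty (ObjectProperty.FullSubcategory (fun p : Over X => Epi p.hom ∧ p.left ∈ A))] :
    IsConnected (ObjectProperty.FullSubcategory (fun p : Over X => Epi p.hom ∧ p.left ∈ A)) := by
  apply zigzag_isConnected
  intro p q
  obtain ⟨hp, hpA⟩ := p.property
  obtain ⟨hq, hqA⟩ := q.property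
  set f := p.obj.hom with hf
  set g := q.obj.hom with hg
  -- the biproduct `p.obj.left ⊞ q.obj.left` lies in `A`, being a (split) extension
  have hsum : (p.obj.left ⊞ q.obj.left : C) ∈ A :=
    hext _ (ShortComplex.Splitting.ofHasBinaryBiproduct p.obj.left q.obj.left).shortExact
      hpA hqA
  -- the induced map to `X` is epi since `f` is
  have hepi : Epi (biprod.desc f g) := by
    constructor
    intro Z u v h
    have := hp
    rw [hf] at this
    exact (cancel_epi f).mp (by simpa using biprod.inl ≫= h)
  let r : ObjectProperty.FullSubcategory (fun p : Over X => Epi p.hom ∧ p.left ∈ A) :=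
    ⟨Over.mk (biprod.desc f g), hepi, hsum⟩
  have m₁ : p ⟶ r := ObjectProperty.homMk (Over.homMk biprod.inl (by simp [r, hf]))
  have m₂ : q ⟶ r := ObjectProperty.homMk (Over.homMk biprod.inr (by simp [r, hg]))
  exact Relation.ReflTransGen.tail (Relation.ReflTransGen.single (Or.inl ⟨m₁⟩)) (Or.inr ⟨m₂⟩)
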